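/- Let g be a finite-dimensional real semisimple Lie algebra equipped with a ℤ-grading g = ⊕_{λ=-Δ}^{Δ} g_λ satisfying dim g_λ = dim g_{−λ} for all λ and dim g_{λ+1} ≤ dim g_λ for all λ ≥ 0 (as holds for the grading induced by a restricted-root decomposition, where g₀ = a ⊕ m₀). Set m = dim g₀. Then the direct product Lie algebra g ⊕ ℝ^m carries a nondegenerate symmetric bilinear form B of split signature (p,p), where 2p = dim g + m, such that the Lie bracket of g ⊕ ℝ^m is in the null cone of the O(B)-action. -/

import Mathlib

/-- The isometry group `O(B)` of a bilinear form `B`. -/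
def IsometryGrp {V : Type*} [AddCommGroup V] [Module ℝ V]
    (B : LinearMap.BilinForm ℝ V) : Set (V ≃ₗ[ℝ] V) :=
  {A | ∀ x y, B (A x) (A y) = B x y}

/-- `μ` is in the null cone of the `O(B)`-action: `0` lies in the closure of the orbit
`O(B)·μ`, `(A·μ)(x,y) = A⁻¹(μ(Ax,Ay))`, in the topology of pointwise convergence. -/
def InNullCone {V : Type*} [AddCommGroup V] [Module ℝ V] [TopologicalSpace V]
    (B : LinearMap.BilinForm ℝ V) (μ : V → V → V) : Prop :=
  (0 : V → V → V) ∈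
    closure {f : V → V → V | ∃ A ∈ IsometryGrp B, f = fun x y => A.symm (μ (A x) (A y))}

/-- `B` has signature `(p,q)`: it is represented in some basis by the diagonal matrix with
`p` entries `+1` and `q` entries `-1`. -/
def HasSignature {V : Type*} [AddCommGroup V] [Module ℝ V]
    (B : LinearMap.BilinForm ℝ V) (p q : ℕ) : Prop :=
  ∃ b : Module.Basis (Fin p ⊕ Fin q) ℝ V, ∀ i j, B (b i) (b j) =
    if i = j then Sum.elim (fun _ => (1 : ℝ)) (fun _ => (-1 : ℝ)) i else 0

open Module

theorem aux_null {W : Type} [AddCommGroup W] [Module ℝ W] [TopologicalSpace W]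
    [IsTopologicalAddGroup W] [ContinuousSMul ℝ W]
    (μ : W → W → W) (p : ℕ) (c : Basis (Fin p ⊕ Fin p) ℝ W) (w : Fin p ⊕ Fin p → ℤ)
    (hw : ∀ i : Fin p, w (Sum.inr i) = - w (Sum.inl i))
    (D : ∀ t : ℝ, 0 < t → (W ≃ₗ[ℝ] W))
    (hD : ∀ (t : ℝ) (ht : 0 < t) (k : Fin p ⊕ Fin p), D t ht (c k) = (t ^ (w k) : ℝ) • c k)
    (hμ : ∀ (t : ℝ) (ht : 0 < t),
      (fun x y => (D t ht).symm (μ (D t ht x) (D t ht y))) = t • μ) :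
    ∃ B : LinearMap.BilinForm ℝ W, HasSignature B p p ∧ InNullCone B μ := by
  classical
  -- the hyperbolic form
  set M : (Fin p ⊕ Fin p) → (Fin p ⊕ Fin p) → ℝ :=
    fun k k' => if k' = Sum.swap k then 1 else 0 with hM
  set B : LinearMap.BilinForm ℝ W := c.constr ℝ (fun k => c.constr ℝ (M k)) with hBdef
  have hB : ∀ k k', B (c k) (c k') = M k k' := by
    intro k k'; rw [hBdef, Basis.constr_basis, Basis.constr_basis]
  have hwswap : ∀ k, w (Sum.swap k) = - w k := by
    rintro (i | i)
    · exact hw i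
    · simp [hw i]
  refine ⟨B, ?_, ?_⟩
  · -- HasSignature
    set r : ℝ := (Real.sqrt 2)⁻¹ with hr
    have hr2 : r * r = 2⁻¹ := by
      rw [hr, ← mul_inv]
      norm_num [Real.mul_self_sqrt]
    set eb : Fin p ⊕ Fin p → W := fun k =>
      Sum.elim (fun i => r • (c (Sum.inl i) + c (Sum.inr i)))
        (fun i => r • (c (Sum.inl i) - c (Sum.inr i))) k with heb
    set E : W →ₗ[ℝ] W := c.constr ℝ eb with hE
    have hEc : ∀ k, E (c k) = eb k := fun k => c.constr_basis ℝ eb k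
    have key1 : ∀ a b : W, r • (r • (a + b) + r • (a - b)) = a := by
      intro a b
      rw [smul_add, smul_smul, smul_smul, hr2, ← smul_add]
      have h2 : (a + b) + (a - b) = (2:ℝ) • a := by rw [two_smul]; abel
      rw [h2, smul_smul]; norm_num
    have key2 : ∀ a b : W, r • (r • (a + b) - r • (a - b)) = b := by
      intro a b
      rw [smul_sub, smul_smul, smul_smul, hr2, ← smul_sub]
      have h2 : (a + b) - (a - b) = (2:ℝ) • b := by rw [two_smul]; abel
      rw [h2, smul_smul]; norm_num
    have hEE : E ∘ₗ E = LinearMap.id := by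
      apply c.ext
      rintro (i | i) <;>
        simp only [LinearMap.comp_apply, LinearMap.id_apply, hEc, heb, Sum.elim_inl,
          Sum.elim_inr, map_smul, map_add, map_sub, hEc]
      · exact key1 _ _
      · exact key2 _ _
    set Ee : W ≃ₗ[ℝ] W := LinearEquiv.ofLinear E E hEE hEE with hEe
    refine ⟨c.map Ee, ?_⟩
    have hmap : ∀ k, (c.map Ee) k = eb k := by
      intro k; rw [Basis.map_apply]; exact hEc k
    intro i j
    rw [hmap, hmap]
    rcases i with i | i <;> rcases j with j | j <;>
      simp only [heb, Sum.elim_inl, Sum.elim_inr, map_smul, map_add, map_sub,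
        LinearMap.smul_apply, LinearMap.add_apply, LinearMap.sub_apply, smul_eq_mul,
        hB, hM] <;>
      rcases eq_or_ne i j with h | h <;>
      (simp [h, Sum.swap, hr2]; try ring_nf; try simp [hr2]; try ring_nf) <;>
      (try exact Ne.symm h) <;>
      first
        | (rw [sq, hr2]; norm_num)
        | exact Or.inr fun h' => absurd h'.symm h
  · -- null cone
    have hiso : ∀ (t : ℝ) (ht : 0 < t), D t ht ∈ IsometryGrp B := by
      intro t ht
      have key : B.compl₁₂ (D t ht).toLinearMap (D t ht).toLinearMap = B := by
        apply c.ext; intro k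
        apply c.ext; intro k'
        rw [LinearMap.compl₁₂_apply]
        simp only [LinearEquiv.coe_coe, hD, map_smul, LinearMap.smul_apply, smul_eq_mul, hB]
        rcases eq_or_ne k' (Sum.swap k) with h | h
        · subst h
          rw [hM]; simp only [if_pos rfl]
          rw [hwswap, zpow_neg]
          field_simp
        · rw [hM]; simp [h]
      intro x y
      have := congrArg (fun f => (f x) y) key
      simpa [LinearMap.compl₁₂_apply] using this
    have hsub : ∀ (t : ℝ) (ht : 0 < t), (t • μ) ∈
        {f : W → W → W | ∃ A ∈ IsometryGrp B, f = fun x y => A.symm (μ (A x) (A y))} := by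
      intro t ht
      exact ⟨D t ht, hiso t ht, (hμ t ht).symm⟩
    have htend : Filter.Tendsto (fun t : ℝ => t • μ) (nhdsWithin 0 (Set.Ioi 0)) (nhds 0) := by
      have h1 : Filter.Tendsto (fun t : ℝ => t • μ) (nhds 0) (nhds ((0:ℝ) • μ)) :=
        Filter.tendsto_id.smul_const μ
      rw [zero_smul] at h1
      exact h1.mono_left nhdsWithin_le_nhds
    exact mem_closure_of_tendsto htend
      (eventually_nhdsWithin_of_forall fun t ht => hsub t ht)

open Module

noncomputable def scaleMap {V : Type*} {ι : Type*} [AddCommGroup V] [Module ℝ V]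
    (b : Basis ι ℝ V) (e : ι → ℤ) (t : ℝ) : V →ₗ[ℝ] V :=
  b.constr ℝ (fun i => (t ^ (e i) : ℝ) • b i)

lemma scaleMap_basis {V : Type*} {ι : Type*} [AddCommGroup V] [Module ℝ V]
    (b : Basis ι ℝ V) (e : ι → ℤ) (t : ℝ) (i : ι) :
    scaleMap b e t (b i) = (t ^ (e i) : ℝ) • b i :=
  b.constr_basis ℝ _ i

lemma scaleMap_comp {V : Type*} {ι : Type*} [AddCommGroup V] [Module ℝ V]
    (b : Basis ι ℝ V) (e : ι → ℤ) (t : ℝ) (ht : t ≠ 0) :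
    (scaleMap b e t) ∘ₗ (scaleMap b e t⁻¹) = LinearMap.id := by
  apply b.ext
  intro i
  simp only [LinearMap.comp_apply, LinearMap.id_apply, scaleMap_basis, map_smul]
  rw [smul_smul, inv_zpow, inv_mul_cancel₀ (zpow_ne_zero _ ht), one_smul]

noncomputable def scaleEquiv {V : Type*} {ι : Type*} [AddCommGroup V] [Module ℝ V]
    (b : Basis ι ℝ V) (e : ι → ℤ) (t : ℝ) (ht : t ≠ 0) : V ≃ₗ[ℝ] V :=
  LinearEquiv.ofLinear (scaleMap b e t) (scaleMap b e t⁻¹)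
    (scaleMap_comp b e t ht)
    (by have := scaleMap_comp b e t⁻¹ (inv_ne_zero ht); rwa [inv_inv] at this)

lemma scaleEquiv_apply {V : Type*} {ι : Type*} [AddCommGroup V] [Module ℝ V]
    (b : Basis ι ℝ V) (e : ι → ℤ) (t : ℝ) (ht : t ≠ 0) (x : V) :
    scaleEquiv b e t ht x = scaleMap b e t x := rfl

lemma scaleEquiv_symm_apply {V : Type*} {ι : Type*} [AddCommGroup V] [Module ℝ V]
    (b : Basis ι ℝ V) (e : ι → ℤ) (t : ℝ) (ht : t ≠ 0) (x : V) :
    (scaleEquiv b e t ht).symm x = scaleMap b e t⁻¹ x := rfl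

abbrev auxP (n : ℤ → ℕ) (Δ : ℕ) : Type := (lam : Fin (Δ + 1)) × Fin (n ((lam : ℕ) : ℤ))

noncomputable def auxPsi (n : ℤ → ℕ) (Δ m : ℕ)
    (hb : ∀ (lam : Fin (Δ + 1)) (i : Fin (n ((lam : ℕ) : ℤ))), m - 1 - (i : ℕ) < m) :
    auxP n Δ ⊕ auxP n Δ → ((l : ℤ) × Fin (n l)) ⊕ Fin m
  | Sum.inl ⟨lam, i⟩ => Sum.inl ⟨((lam : ℕ) : ℤ), i⟩
  | Sum.inr ⟨lam, i⟩ =>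
      if h : (i : ℕ) < n (-((lam : ℕ) : ℤ) - 1) then
        Sum.inl ⟨-((lam : ℕ) : ℤ) - 1, ⟨(i : ℕ), h⟩⟩
      else Sum.inr ⟨m - 1 - (i : ℕ), hb lam i⟩

theorem auxPsi_bijective (n : ℤ → ℕ) (Δ m : ℕ)
    (hsymm : ∀ l : ℤ, n (-l) = n l)
    (hanti : ∀ a b : ℕ, a ≤ b → n (b : ℤ) ≤ n (a : ℤ))
    (hvan : ∀ l : ℤ, Δ < l.natAbs → n l = 0)
    (h0 : n 0 = m)
    (hb : ∀ (lam : Fin (Δ + 1)) (i : Fin (n ((lam : ℕ) : ℤ))), m - 1 - (i : ℕ) < m) :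
    Function.Bijective (auxPsi n Δ m hb) := by
  have hneg : ∀ a : ℕ, n (-(a : ℤ) - 1) = n ((a : ℤ) + 1) := by
    intro a
    have := hsymm ((a : ℤ) + 1)
    rw [show -((a : ℤ) + 1) = -(a : ℤ) - 1 by ring] at this
    exact this
  constructor
  · rintro (⟨lam, i⟩ | ⟨lam, i⟩) (⟨lam', i'⟩ | ⟨lam', i'⟩) hqq
    · -- inl inl
      simp only [auxPsi, Sum.inl.injEq, Sigma.mk.inj_iff] at hqq
      obtain ⟨h1, h2⟩ := hqq
      have hl : lam = lam' := by
        apply Fin.ext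
        exact_mod_cast h1
      subst hl
      rw [eq_of_heq h2]
    · -- inl inr
      exfalso
      simp only [auxPsi] at hqq
      split_ifs at hqq with h <;> simp only [Sum.inl.injEq, Sigma.mk.inj_iff,
        reduceCtorEq] at hqq
      obtain ⟨h1, h2⟩ := hqq
      omega
    · -- inr inl
      exfalso
      simp only [auxPsi] at hqq
      split_ifs at hqq with h <;> simp only [Sum.inl.injEq, Sigma.mk.inj_iff,
        reduceCtorEq] at hqq
      obtain ⟨h1, h2⟩ := hqq
      omega
    · -- inr inr
      simp only [auxPsi] at hqq
      split_ifs at hqq with h h' h'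
      · simp only [Sum.inl.injEq, Sigma.mk.inj_iff] at hqq
        obtain ⟨h1, h2⟩ := hqq
        have hl : lam = lam' := by apply Fin.ext; omega
        subst hl
        have : ((⟨(i : ℕ), h⟩ : Fin (n (-((lam : ℕ) : ℤ) - 1))) : ℕ) =
            ((⟨(i' : ℕ), h'⟩ : Fin (n (-((lam : ℕ) : ℤ) - 1))) : ℕ) := by
          rw [eq_of_heq h2]
        have hii : i = i' := Fin.ext this
        rw [hii]
      · simp only [Sum.inr.injEq, Fin.mk.injEq] at hqq
        -- second kind both
        have hi1 : (i : ℕ) < n ((lam : ℕ) : ℤ) := i.2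
        have hi2 : (i' : ℕ) < n ((lam' : ℕ) : ℤ) := i'.2
        have hc1 : n (((lam : ℕ) + 1 : ℕ) : ℤ) ≤ (i : ℕ) := by
          rw [not_lt, hneg] at h; push_cast; exact_mod_cast h
        have hc2 : n (((lam' : ℕ) + 1 : ℕ) : ℤ) ≤ (i' : ℕ) := by
          rw [not_lt, hneg] at h'; push_cast; exact_mod_cast h'
        have hm1 : n ((0 : ℕ) : ℤ) = m := h0
        have hle1 : n ((lam : ℕ) : ℤ) ≤ m := by
          have := hanti 0 (lam : ℕ) (Nat.zero_le _); omega
        have hle2 : n ((lam' : ℕ) : ℤ) ≤ m := by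
          have := hanti 0 (lam' : ℕ) (Nat.zero_le _); omega
        have hii : (i : ℕ) = (i' : ℕ) := by omega
        have hll : (lam : ℕ) = (lam' : ℕ) := by
          rcases lt_trichotomy (lam : ℕ) (lam' : ℕ) with hl | hl | hl
          · exfalso
            have := hanti ((lam : ℕ) + 1) (lam' : ℕ) (by omega)
            omega
          · exact hl
          · exfalso
            have := hanti ((lam' : ℕ) + 1) (lam : ℕ) (by omega)
            omega
        have hl : lam = lam' := Fin.ext hll
        subst hl
        have hii' : i = i' := Fin.ext hii
        rw [hii']
  · rintro (⟨l, i⟩ | j)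
    · -- target inl
      have hnl : l.natAbs ≤ Δ := by
        by_contra hcon
        have h0' : n l = 0 := hvan l (by omega)
        have := i.2
        omega
      rcases le_or_gt 0 l with hl | hl
      · obtain ⟨a, rfl⟩ : ∃ a : ℕ, l = (a : ℤ) :=
          ⟨l.toNat, (Int.toNat_of_nonneg hl).symm⟩
        have ha : a < Δ + 1 := by omega
        exact ⟨Sum.inl ⟨⟨a, ha⟩, i⟩, rfl⟩
      · obtain ⟨a, rfl⟩ : ∃ a : ℕ, l = -(a : ℤ) - 1 := by
          refine ⟨(-l - 1).toNat, ?_⟩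
          have h1 : (0 : ℤ) ≤ -l - 1 := by omega
          omega
        have ha : a < Δ + 1 := by omega
        have hi' : (i : ℕ) < n ((a : ℤ)) := by
          have e1 : n (-(a : ℤ) - 1) = n ((a : ℤ) + 1) := hneg a
          have e2 : n (((a + 1 : ℕ)) : ℤ) ≤ n ((a : ℕ) : ℤ) := hanti a (a+1) (by omega)
          have := i.2
          push_cast at e2 ⊢
          omega
        refine ⟨Sum.inr ⟨⟨a, ha⟩, ⟨(i : ℕ), hi'⟩⟩, ?_⟩
        simp only [auxPsi]
        rw [dif_pos i.2]
    · -- target inr j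
      have hm0 : 0 < m := j.pos
      have hP0 : m - 1 - (j : ℕ) < n ((0 : ℕ) : ℤ) := by
        have := j.2
        rw [Nat.cast_zero, h0]
        omega
      set lam0 : ℕ := Nat.findGreatest (fun a => m - 1 - (j : ℕ) < n ((a : ℕ) : ℤ)) Δ
        with hlam0
      have hfg1 : m - 1 - (j : ℕ) < n ((lam0 : ℕ) : ℤ) :=
        Nat.findGreatest_spec (P := fun a => m - 1 - (j : ℕ) < n ((a : ℕ) : ℤ))
          (Nat.zero_le Δ) hP0
      have hfgle : lam0 ≤ Δ := Nat.findGreatest_le Δ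
      have hfg2 : n (((lam0 + 1 : ℕ)) : ℤ) ≤ m - 1 - (j : ℕ) := by
        by_cases hcase : lam0 = Δ
        · have hz : n (((lam0 + 1 : ℕ)) : ℤ) = 0 := by
            apply hvan
            rw [Int.natAbs_natCast]
            omega
          omega
        · have hgr := Nat.findGreatest_is_greatest
            (P := fun a => m - 1 - (j : ℕ) < n ((a : ℕ) : ℤ)) (n := Δ) (k := lam0 + 1)
            (by omega) (by omega)
          omega
      have hival : m - 1 - (j : ℕ) < n (((⟨lam0, by omega⟩ : Fin (Δ+1)) : ℕ) : ℤ) := hfg1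
      refine ⟨Sum.inr ⟨⟨lam0, by omega⟩, ⟨m - 1 - (j : ℕ), hival⟩⟩, ?_⟩
      simp only [auxPsi]
      rw [dif_neg]
      · congr 1
        apply Fin.ext
        simp only
        omega
      · rw [hneg, show ((lam0 : ℤ) + 1) = (((lam0 + 1 : ℕ)) : ℤ) by push_cast; ring]
        exact not_lt.2 hfg2


theorem aux_findGreatest (n : ℤ → ℕ) (Δ : ℕ)
    (hanti : ∀ a b : ℕ, a ≤ b → n (b : ℤ) ≤ n (a : ℤ))
    (lam i : ℕ) (hlam : lam ≤ Δ)
    (hi1 : i < n ((lam : ℕ) : ℤ)) (hi2 : n (((lam + 1 : ℕ)) : ℤ) ≤ i) :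
    Nat.findGreatest (fun a => i < n ((a : ℕ) : ℤ)) Δ = lam := by
  apply le_antisymm
  · by_contra hgt
    push_neg at hgt
    have hfgle : Nat.findGreatest (fun a => i < n ((a : ℕ) : ℤ)) Δ ≤ Δ :=
      Nat.findGreatest_le Δ
    have hspec : i < n ((Nat.findGreatest (fun a => i < n ((a : ℕ) : ℤ)) Δ : ℕ) : ℤ) :=
      Nat.findGreatest_spec (P := fun a => i < n ((a : ℕ) : ℤ)) hlam hi1
    have hmon := hanti (lam + 1) (Nat.findGreatest (fun a => i < n ((a : ℕ) : ℤ)) Δ)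
      (by omega)
    omega
  · exact Nat.le_findGreatest hlam hi1

/-- Let `g` be a finite-dimensional real semisimple Lie algebra with a ℤ-grading
`g = ⊕_{λ=-Δ}^{Δ} g_λ` satisfying `dim g_λ = dim g_{-λ}` and `dim g_{λ+1} ≤ dim g_λ` for
`λ ≥ 0`, and set `m = dim g₀`.  Then `g ⊕ ℝ^m` carries a nondegenerate symmetric bilinear
form of split signature `(p,p)`, `2p = dim g + m`, whose bracket is in the null cone. -/
theorem semisimple_graded_split_signature_in_null_cone
    (g : Type) [LieRing g] [LieAlgebra ℝ g] [FiniteDimensional ℝ g]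
    [TopologicalSpace g] [IsTopologicalAddGroup g] [ContinuousSMul ℝ g] [T2Space g]
    [LieAlgebra.IsSemisimple ℝ g]
    (Δ : ℕ) (gr : ℤ → Submodule ℝ g)
    (hbound : ∀ l : ℤ, gr l ≠ ⊥ → l.natAbs ≤ Δ)
    (hinternal : DirectSum.IsInternal gr)
    (hbr : ∀ (l s : ℤ) (x y : g), x ∈ gr l → y ∈ gr s → ⁅x, y⁆ ∈ gr (l + s))
    (hsymmdim : ∀ l : ℤ, Module.finrank ℝ (gr l) = Module.finrank ℝ (gr (-l)))
    (hdecr : ∀ l : ℤ, 0 ≤ l → Module.finrank ℝ (gr (l + 1)) ≤ Module.finrank ℝ (gr l))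
    (m : ℕ) (hm : m = Module.finrank ℝ (gr 0)) :
    ∃ (B : LinearMap.BilinForm ℝ (g × (Fin m → ℝ))) (p : ℕ),
      2 * p = Module.finrank ℝ g + m ∧ HasSignature B p p ∧
      InNullCone B (fun a b => (⁅a.1, b.1⁆, 0)) := by
  classical
  set n : ℤ → ℕ := fun l => Module.finrank ℝ (gr l) with hn
  -- basic numerics
  have hsymm : ∀ l : ℤ, n (-l) = n l := fun l => (hsymmdim l).symm
  have hanti : ∀ a b : ℕ, a ≤ b → n (b : ℤ) ≤ n (a : ℤ) := by
    intro a b hab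
    induction b with
    | zero =>
      have : a = 0 := by omega
      subst this; exact le_refl _
    | succ b ih =>
      rcases Nat.lt_or_ge a (b + 1) with h | h
      · have h1 : n (((b+1 : ℕ)) : ℤ) ≤ n ((b : ℕ) : ℤ) := by
          have := hdecr (b : ℤ) (by positivity)
          rw [hn]
          push_cast
          exact this
        exact le_trans h1 (ih (by omega))
      · have : a = b + 1 := by omega
        subst this; exact le_refl _
  have hvan : ∀ l : ℤ, Δ < l.natAbs → n l = 0 := by
    intro l hl
    have hbot : gr l = ⊥ := by
      by_contra hne
      exact absurd (hbound l hne) (by omega)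
    show Module.finrank ℝ (gr l) = 0
    rw [hbot]
    exact finrank_bot ℝ g
  have h0 : n 0 = m := hm.symm
  have hb : ∀ (lam : Fin (Δ + 1)) (i : Fin (n ((lam : ℕ) : ℤ))), m - 1 - (i : ℕ) < m := by
    intro lam i
    have h1 := i.2
    have h2 := hanti 0 (lam : ℕ) (Nat.zero_le _)
    rw [Nat.cast_zero, h0] at h2
    omega
  have hneg : ∀ a : ℕ, n (-(a : ℤ) - 1) = n ((a : ℤ) + 1) := by
    intro a
    have := hsymm ((a : ℤ) + 1)
    rw [show -((a : ℤ) + 1) = -(a : ℤ) - 1 by ring] at this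
    exact this
  -- bases
  set bl : (l : ℤ) → Basis (Fin (n l)) ℝ (gr l) := fun l => Module.finBasis ℝ (gr l)
    with hbl
  set cb : Basis ((l : ℤ) × Fin (n l)) ℝ g := hinternal.collectedBasis bl with hcb
  have hcbmem : ∀ q : (l : ℤ) × Fin (n l), (cb q) ∈ gr q.1 :=
    fun q => hinternal.collectedBasis_mem bl q
  set basisW : Basis (((l : ℤ) × Fin (n l)) ⊕ Fin m) ℝ (g × (Fin m → ℝ)) :=
    cb.prod (Pi.basisFun ℝ (Fin m)) with hbW
  set Ψ : (auxP n Δ ⊕ auxP n Δ) ≃ (((l : ℤ) × Fin (n l)) ⊕ Fin m) :=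
    Equiv.ofBijective _ (auxPsi_bijective n Δ m hsymm hanti hvan h0 hb) with hΨ
  set p : ℕ := Fintype.card (auxP n Δ) with hp
  set eP : auxP n Δ ≃ Fin p := Fintype.equivFin _ with heP
  set E2 : (auxP n Δ ⊕ auxP n Δ) ≃ (Fin p ⊕ Fin p) := Equiv.sumCongr eP eP with hE2
  set c : Basis (Fin p ⊕ Fin p) ℝ (g × (Fin m → ℝ)) :=
    (basisW.reindex Ψ.symm).reindex E2 with hc
  have hck : ∀ k, c k = basisW (Ψ (E2.symm k)) := by
    intro k
    rw [hc, Basis.reindex_apply, Basis.reindex_apply, Equiv.symm_symm]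
  -- weights
  set w0 : auxP n Δ ⊕ auxP n Δ → ℤ :=
    Sum.elim (fun x => 2 * ((x.1 : ℕ) : ℤ) + 1) (fun x => -(2 * ((x.1 : ℕ) : ℤ) + 1))
    with hw0
  set w : Fin p ⊕ Fin p → ℤ := fun k => w0 (E2.symm k) with hwdef
  have hw : ∀ i : Fin p, w (Sum.inr i) = - w (Sum.inl i) := by
    intro i
    show w0 (E2.symm (Sum.inr i)) = - w0 (E2.symm (Sum.inl i))
    rw [hE2]
    simp [hw0]
  -- exponents on the collected basis of g
  set eg : ((l : ℤ) × Fin (n l)) → ℤ := fun q => 2 * q.1 + 1 with heg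
  set ω : Fin m → ℤ :=
    fun j => -(2 * ((Nat.findGreatest (fun a => m - 1 - (j : ℕ) < n ((a : ℕ) : ℤ)) Δ : ℕ) : ℤ) + 1)
    with hω
  -- scaling acts on graded pieces
  have hSgr : ∀ (t : ℝ) (l : ℤ) (x : g), x ∈ gr l →
      scaleMap cb eg t x = (t ^ (2 * l + 1) : ℝ) • x := by
    intro t l x hx
    have hxe : x = ∑ i : Fin (n l), ((bl l).repr ⟨x, hx⟩ i) • (cb ⟨l, i⟩) := by
      have h1 := (bl l).sum_repr ⟨x, hx⟩
      have h2 := congrArg (Submodule.subtype (gr l)) h1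
      simp only [map_sum, map_smul, Submodule.coe_subtype] at h2
      have h3 : ∀ i : Fin (n l), cb ⟨l, i⟩ = ((bl l i : g)) := by
        intro i
        rw [hcb, hinternal.collectedBasis_coe bl]
      simp only [h3]
      exact h2.symm
    rw [hxe, map_sum, Finset.smul_sum]
    apply Finset.sum_congr rfl
    intro i _
    rw [map_smul, scaleMap_basis, smul_comm]
  -- conjugating the bracket
  have hbrk : ∀ (t : ℝ) (ht : 0 < t) (a b : g),
      (scaleEquiv cb eg t ht.ne').symm
          ⁅scaleEquiv cb eg t ht.ne' a, scaleEquiv cb eg t ht.ne' b⁆ = t • ⁅a, b⁆ := by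
    intro t ht a b
    set Sq : g ≃ₗ[ℝ] g := scaleEquiv cb eg t ht.ne' with hSq
    set Br : g →ₗ[ℝ] g →ₗ[ℝ] g :=
      LinearMap.mk₂ ℝ (fun x y => ⁅x, y⁆) add_lie smul_lie lie_add lie_smul with hBr
    have hL : ((Br.compl₁₂ Sq.toLinearMap Sq.toLinearMap).compr₂
        Sq.symm.toLinearMap) = t • Br := by
      apply cb.ext; intro q
      apply cb.ext; intro q'
      simp only [LinearMap.compr₂_apply, LinearMap.compl₁₂_apply, LinearEquiv.coe_coe,
        LinearMap.smul_apply, LinearMap.mk₂_apply, hBr]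
      simp only [hSq, scaleEquiv_apply, scaleEquiv_symm_apply]
      rw [hSgr t q.1 (cb q) (hcbmem q), hSgr t q'.1 (cb q') (hcbmem q')]
      rw [lie_smul, smul_lie]
      rw [map_smul, map_smul]
      rw [hSgr t⁻¹ (q.1 + q'.1) ⁅cb q, cb q'⁆ (hbr q.1 q'.1 _ _ (hcbmem q) (hcbmem q'))]
      rw [smul_smul, smul_smul]
      congr 1
      rw [inv_zpow, ← zpow_neg, ← zpow_add₀ ht.ne', ← zpow_add₀ ht.ne']
      have hex : ∀ A : ℤ, A = 1 → t ^ A = t := fun A hA => by rw [hA, zpow_one]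
      apply hex
      ring
    have h2 := DFunLike.congr_fun (DFunLike.congr_fun hL a) b
    simpa only [LinearMap.compr₂_apply, LinearMap.compl₁₂_apply, LinearEquiv.coe_coe,
      LinearMap.smul_apply, LinearMap.mk₂_apply, hBr] using h2
  -- product basis values
  have hbWl : ∀ σ : (l : ℤ) × Fin (n l), basisW (Sum.inl σ) = (cb σ, 0) := by
    intro σ
    rw [hbW]
    simp [Basis.prod_apply]
  have hbWr : ∀ j : Fin m, basisW (Sum.inr j) = (0, Pi.basisFun ℝ (Fin m) j) := by
    intro j
    rw [hbW]
    simp [Basis.prod_apply]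
  -- the diagonal action on the reindexed basis
  have hDc : ∀ (t : ℝ) (ht : 0 < t) (k : Fin p ⊕ Fin p),
      ((scaleEquiv cb eg t ht.ne').prodCongr (scaleEquiv (Pi.basisFun ℝ (Fin m)) ω t ht.ne'))
        (c k) = (t ^ (w k) : ℝ) • c k := by
    intro t ht k
    rw [hck, hwdef]
    rcases hq : E2.symm k with ⟨lam, i⟩ | ⟨lam, i⟩ <;> simp only [hq]
    · have hΨq : Ψ (Sum.inl ⟨lam, i⟩) = Sum.inl ⟨((lam : ℕ) : ℤ), i⟩ := rfl
      rw [hΨq, hbWl]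
      rw [LinearEquiv.prodCongr_apply]
      simp only [map_zero]
      rw [scaleEquiv_apply, scaleMap_basis]
      rw [Prod.smul_mk, smul_zero]
      simp only [hw0, heg, Sum.elim_inl]
    · by_cases hcase : (i : ℕ) < n (-((lam : ℕ) : ℤ) - 1)
      · have hΨq : Ψ (Sum.inr ⟨lam, i⟩) =
            Sum.inl ⟨-((lam : ℕ) : ℤ) - 1, ⟨(i : ℕ), hcase⟩⟩ := by
          have hq0 : Ψ (Sum.inr ⟨lam, i⟩) = auxPsi n Δ m hb (Sum.inr ⟨lam, i⟩) := rfl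
          rw [hq0]
          simp only [auxPsi]
          rw [dif_pos hcase]
        rw [hΨq, hbWl]
        rw [LinearEquiv.prodCongr_apply]
        simp only [map_zero]
        rw [scaleEquiv_apply, scaleMap_basis]
        rw [Prod.smul_mk, smul_zero]
        rw [show eg ⟨-((lam : ℕ) : ℤ) - 1, ⟨(i : ℕ), hcase⟩⟩ =
            w0 (Sum.inr ⟨lam, i⟩) from by
          rw [heg, hw0]
          simp only [Sum.elim_inr]
          ring]
      · have hΨq : Ψ (Sum.inr ⟨lam, i⟩) = Sum.inr ⟨m - 1 - (i : ℕ), hb lam i⟩ := by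
          have hq0 : Ψ (Sum.inr ⟨lam, i⟩) = auxPsi n Δ m hb (Sum.inr ⟨lam, i⟩) := rfl
          rw [hq0]
          simp only [auxPsi]
          rw [dif_neg hcase]
        rw [hΨq, hbWr]
        rw [LinearEquiv.prodCongr_apply]
        simp only [map_zero]
        rw [scaleEquiv_apply, scaleMap_basis]
        rw [Prod.smul_mk, smul_zero]
        have hii : m - 1 - (m - 1 - (i : ℕ)) = (i : ℕ) := by
          have h1 := i.2
          have h2 := hanti 0 (lam : ℕ) (Nat.zero_le _)
          rw [Nat.cast_zero, h0] at h2
          omega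
        have hfg : Nat.findGreatest
            (fun a => m - 1 - (m - 1 - (i : ℕ)) < n ((a : ℕ) : ℤ)) Δ = (lam : ℕ) := by
          simp only [hii]
          apply aux_findGreatest n Δ hanti (lam : ℕ) (i : ℕ) (by omega) i.2
          rw [not_lt, hneg] at hcase
          rw [show ((((lam : ℕ) + 1 : ℕ)) : ℤ) = ((lam : ℕ) : ℤ) + 1 by push_cast; ring]
          exact hcase
        have hωj : ω (⟨m - 1 - (i : ℕ), hb lam i⟩ : Fin m) = w0 (Sum.inr ⟨lam, i⟩) := by
          rw [hω, hw0]
          simp only [Sum.elim_inr]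
          rw [hfg]
        rw [hωj]
  -- the conjugated bracket shrinks
  have hμc : ∀ (t : ℝ) (ht : 0 < t),
      (fun x y : g × (Fin m → ℝ) =>
        ((scaleEquiv cb eg t ht.ne').prodCongr
            (scaleEquiv (Pi.basisFun ℝ (Fin m)) ω t ht.ne')).symm
          ((fun a b : g × (Fin m → ℝ) => (⁅a.1, b.1⁆, (0 : Fin m → ℝ)))
            (((scaleEquiv cb eg t ht.ne').prodCongr
                (scaleEquiv (Pi.basisFun ℝ (Fin m)) ω t ht.ne')) x)
            (((scaleEquiv cb eg t ht.ne').prodCongr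
                (scaleEquiv (Pi.basisFun ℝ (Fin m)) ω t ht.ne')) y)))
        = t • (fun a b : g × (Fin m → ℝ) => (⁅a.1, b.1⁆, (0 : Fin m → ℝ))) := by
    intro t ht
    funext x y
    have hPsymm : ∀ (z : g) (v : Fin m → ℝ),
        ((scaleEquiv cb eg t ht.ne').prodCongr
            (scaleEquiv (Pi.basisFun ℝ (Fin m)) ω t ht.ne')).symm (z, v)
          = ((scaleEquiv cb eg t ht.ne').symm z,
             (scaleEquiv (Pi.basisFun ℝ (Fin m)) ω t ht.ne').symm v) := by
      intro z v
      rw [LinearEquiv.symm_apply_eq, LinearEquiv.prodCongr_apply]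
      simp
    simp only [LinearEquiv.prodCongr_apply]
    rw [hPsymm]
    rw [hbrk t ht]
    simp only [map_zero, Pi.smul_apply, Prod.smul_mk, smul_zero]
  -- dimension count
  have h2p : 2 * p = finrank ℝ g + m := by
    have h1 : finrank ℝ (g × (Fin m → ℝ)) = Fintype.card (Fin p ⊕ Fin p) :=
      finrank_eq_card_basis c
    rw [finrank_prod, Module.finrank_fin_fun] at h1
    simp only [Fintype.card_sum, Fintype.card_fin] at h1
    omega
  obtain ⟨B, hsig, hnull⟩ := aux_null
    (fun a b : g × (Fin m → ℝ) => (⁅a.1, b.1⁆, (0 : Fin m → ℝ))) p c w hw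
    (fun t ht => (scaleEquiv cb eg t ht.ne').prodCongr
      (scaleEquiv (Pi.basisFun ℝ (Fin m)) ω t ht.ne'))
    hDc hμc
  exact ⟨B, p, h2p, hsig, hnull⟩
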